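/- The member state choice rule Ĉ_m respects member state priorities: for any set of contracts X', an asylum seeker a with a contract in X' ends up with an accepted contract if and only if (i) the total burden-size of accepted asylum seekers with priority higher than a is strictly less than the quota q_m, and (ii) there exists a wait time w with a contract of a in X' such that the number of higher-priority accepted asylum seekers at w is strictly less than r^w_m. -/

import Mathlib

/-- A contract at a fixed member state: `(asylum seeker, wait time)`.
Asylum seekers are labelled by naturals; `π a` is the priority rank of `a`
(smaller rank = higher priority); wait times are naturals. -/
abbrev Ctr := ℕ × ℕ

open Classical in
/-- Pick, from a nonempty set of contracts, the lowest-wait-time contract of the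
highest-priority asylum seeker (lexicographic minimum of (rank, wait, agent)). -/
noncomputable def pick (π : ℕ → ℕ) (Z : Finset Ctr) (h : Z.Nonempty) : Ctr :=
  let k := (Z.image fun x => toLex ((π x.1 : ℕ), toLex (x.2, x.1))).min'
    (h.image _)
  ((ofLex (ofLex k).2).2, (ofLex (ofLex k).2).1)

open Classical in
/-- One run of the greedy algorithm with fuel.  `excl = true` excludes all
contracts of already accepted asylum seekers (the rule `Ĉ_m`), `excl = false`
excludes only already accepted contracts (the completion `Ĉ'_m`). -/
noncomputable def run (s : ℕ → ℕ) (q : ℕ) (r π : ℕ → ℕ) (excl : Bool)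
    (X' : Finset Ctr) : ℕ → Finset Ctr → Finset Ctr
  | 0, acc => acc
  | n+1, acc =>
    let Z : Finset Ctr := X'.filter fun x =>
      (acc.filter fun y => y.2 = x.2).card < r x.2 ∧
      (excl = true → ∀ y ∈ acc, y.1 ≠ x.1) ∧
      (excl = false → x ∉ acc)
    if q ≤ acc.sum (fun x => s x.1) then acc
    else if h : Z.Nonempty then
      run s q r π excl X' n (insert (pick π Z h) acc)
    else acc

/-- The member state choice rule `Ĉ_m`. -/
noncomputable def Chat (s : ℕ → ℕ) (q : ℕ) (r π : ℕ → ℕ)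
    (X' : Finset Ctr) : Finset Ctr :=
  run s q r π true X' (X'.card + 1) ∅

/-- The completion `Ĉ'_m` of the member state choice rule. -/
noncomputable def Chat' (s : ℕ → ℕ) (q : ℕ) (r π : ℕ → ℕ)
    (X' : Finset Ctr) : Finset Ctr :=
  run s q r π false X' (X'.card + 1) ∅

open Classical

namespace ChatProof

variable (s : ℕ → ℕ) (q : ℕ) (r π : ℕ → ℕ) (X' : Finset Ctr)

noncomputable def Zs (acc : Finset Ctr) : Finset Ctr :=
  X'.filter fun x =>
    (acc.filter fun y => y.2 = x.2).card < r x.2 ∧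
    ((true : Bool) = true → ∀ y ∈ acc, y.1 ≠ x.1) ∧
    ((true : Bool) = false → x ∉ acc)

lemma mem_Zs {acc x} : x ∈ Zs r X' acc ↔
    x ∈ X' ∧ (acc.filter fun y => y.2 = x.2).card < r x.2 ∧ ∀ y ∈ acc, y.1 ≠ x.1 := by
  simp [Zs, and_assoc]

lemma run_succ (n : ℕ) (acc : Finset Ctr) :
    run s q r π true X' (n+1) acc =
      if q ≤ acc.sum (fun x => s x.1) then acc
      else if h : (Zs r X' acc).Nonempty then
        run s q r π true X' n (insert (pick π (Zs r X' acc) h) acc)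
      else acc := rfl

lemma pick_spec (Z : Finset Ctr) (h : Z.Nonempty) :
    pick π Z h ∈ Z ∧ ∀ c ∈ Z, π (pick π Z h).1 ≤ π c.1 := by
  obtain ⟨x, hx, hfx⟩ := Finset.mem_image.mp
    (Finset.min'_mem (Z.image fun x => toLex ((π x.1 : ℕ), toLex (x.2, x.1))) (h.image _))
  have hp : pick π Z h = x := by
    simp only [pick, ← hfx, ofLex_toLex]
  refine ⟨hp ▸ hx, fun c hc => ?_⟩
  have hle := Finset.min'_le (Z.image fun x => toLex ((π x.1 : ℕ), toLex (x.2, x.1)))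
    _ (Finset.mem_image_of_mem _ hc)
  rw [← hfx] at hle
  rcases Prod.Lex.le_iff.mp hle with h1 | ⟨h1, _⟩
  · exact hp ▸ le_of_lt h1
  · exact hp ▸ le_of_eq h1


lemma subset_run (fuel : ℕ) : ∀ acc, acc ⊆ run s q r π true X' fuel acc := by
  induction fuel with
  | zero => intro acc; exact fun x hx => hx
  | succ n ih =>
    intro acc
    rw [run_succ]
    split
    · exact fun x hx => hx
    · split
      · exact fun x hx => ih _ (Finset.mem_insert_of_mem hx)
      · exact fun x hx => hx

lemma Zs_anti {acc acc' : Finset Ctr} (hsub : acc ⊆ acc') :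
    Zs r X' acc' ⊆ Zs r X' acc := by
  intro x hx
  rw [mem_Zs] at hx ⊢
  exact ⟨hx.1, lt_of_le_of_lt (Finset.card_le_card
    (Finset.filter_subset_filter _ hsub)) hx.2.1, fun y hy => hx.2.2 y (hsub hy)⟩

lemma run_mem (fuel : ℕ) : ∀ acc, ∀ x ∈ run s q r π true X' fuel acc,
    x ∈ acc ∨ x ∈ Zs r X' acc := by
  induction fuel with
  | zero => intro acc x hx; exact Or.inl hx
  | succ n ih =>
    intro acc x
    rw [run_succ]
    split
    · exact Or.inl
    · split
      next h =>
        intro hx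
        rcases ih _ x hx with hx' | hx'
        · rcases Finset.mem_insert.mp hx' with rfl | hx''
          · exact Or.inr (pick_spec π _ h).1
          · exact Or.inl hx''
        · exact Or.inr (Zs_anti r X' (Finset.subset_insert _ _) hx')
      · exact Or.inl

lemma run_fix (fuel : ℕ) : ∀ acc, (X' \ acc).card < fuel →
    q ≤ (run s q r π true X' fuel acc).sum (fun x => s x.1) ∨
    Zs r X' (run s q r π true X' fuel acc) = ∅ := by
  induction fuel with
  | zero => intro acc h; omega
  | succ n ih =>
    intro acc hfuel
    rw [run_succ]
    split
    next hq => exact Or.inl hq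
    next hq =>
      split
      next h =>
        set p := pick π (Zs r X' acc) h with hp
        have hpZ : p ∈ Zs r X' acc := (pick_spec π _ h).1
        rw [mem_Zs] at hpZ
        have hpnacc : p ∉ acc := fun hmem => hpZ.2.2 p hmem rfl
        have hps : p ∈ X' \ acc := Finset.mem_sdiff.mpr ⟨hpZ.1, hpnacc⟩
        apply ih
        have hss : X' \ insert p acc ⊆ (X' \ acc).erase p := by
          intro x hx
          rw [Finset.mem_sdiff, Finset.mem_insert] at hx
          push_neg at hx
          exact Finset.mem_erase.mpr ⟨hx.2.1, Finset.mem_sdiff.mpr ⟨hx.1, hx.2.2⟩⟩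
        have := Finset.card_le_card hss
        have hce : ((X' \ acc).erase p).card = (X' \ acc).card - 1 :=
          Finset.card_erase_of_mem hps
        have : 1 ≤ (X' \ acc).card := Finset.card_pos.mpr ⟨p, hps⟩
        omega
      next h => exact Or.inr (Finset.not_nonempty_iff_eq_empty.mp h)
lemma key (c : Ctr) (hc : c ∈ X') (fuel : ℕ) :
    ∀ acc : Finset Ctr,
    (∀ y ∈ run s q r π true X' fuel acc, y.1 ≠ c.1) →
    (∀ x ∈ acc,
      (π c.1 < π x.1 → r c.2 ≤ (acc.filter fun y => y.2 = c.2).card) ∧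
      (x.2 = c.2 → π x.1 ≤ π c.1)) →
    ∀ x ∈ run s q r π true X' fuel acc,
      (π c.1 < π x.1 →
        r c.2 ≤ ((run s q r π true X' fuel acc).filter fun y => y.2 = c.2).card) ∧
      (x.2 = c.2 → π x.1 ≤ π c.1) := by
  induction fuel with
  | zero =>
    intro acc _ H x hx
    exact ⟨fun hlt => (H x hx).1 hlt, (H x hx).2⟩
  | succ n ih =>
    intro acc hfree H
    rw [run_succ] at hfree ⊢
    by_cases hq : q ≤ acc.sum (fun x => s x.1)
    · rw [if_pos hq] at hfree ⊢
      exact fun x hx => ⟨fun hlt => (H x hx).1 hlt, (H x hx).2⟩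
    · rw [if_neg hq] at hfree ⊢
      by_cases h : (Zs r X' acc).Nonempty
      · rw [dif_pos h] at hfree ⊢
        set p := pick π (Zs r X' acc) h with hp
        have hpZ : p ∈ Zs r X' acc := (pick_spec π _ h).1
        have hpmin := (pick_spec π _ h).2
        rw [mem_Zs] at hpZ
        have haccsub : insert p acc ⊆ run s q r π true X' n (insert p acc) :=
          subset_run s q r π X' n _
        apply ih
        · exact hfree
        · intro x hx
          rcases Finset.mem_insert.mp hx with rfl | hxa
          · constructor
            · intro hlt
              have hcZ : c ∉ Zs r X' acc := fun hmem =>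
                absurd (hpmin c hmem) (not_le.mpr hlt)
              rw [mem_Zs] at hcZ
              push_neg at hcZ
              have hcfree : ∀ y ∈ acc, y.1 ≠ c.1 := fun y hy =>
                hfree y (haccsub (Finset.mem_insert_of_mem hy))
              have hcount : r c.2 ≤ (acc.filter fun y => y.2 = c.2).card := by
                by_contra hcon
                exact absurd (hcZ hc (not_le.mp hcon)) (by push_neg; exact hcfree)
              exact le_trans hcount (Finset.card_le_card
                (Finset.filter_subset_filter _ (Finset.subset_insert _ _)))
            · intro hxc
              have hcZ : c ∈ Zs r X' acc := by
                rw [mem_Zs]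
                refine ⟨hc, ?_, fun y hy =>
                  hfree y (haccsub (Finset.mem_insert_of_mem hy))⟩
                rw [← hxc]
                exact hpZ.2.1
              exact hpmin c hcZ
          · have := H x hxa
            exact ⟨fun hlt => le_trans (this.1 hlt) (Finset.card_le_card
              (Finset.filter_subset_filter _ (Finset.subset_insert _ _))), this.2⟩
      · rw [dif_neg h] at hfree ⊢
        exact fun x hx => ⟨fun hlt => (H x hx).1 hlt, (H x hx).2⟩

lemma fwd (a : ℕ) (fuel : ℕ) :
    ∀ acc : Finset Ctr, (∀ y ∈ acc, y.1 ≠ a) →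
    (∃ x ∈ run s q r π true X' fuel acc, x.1 = a) →
    ∃ w, (a, w) ∈ X' ∧ ∃ B : Finset Ctr,
      ((run s q r π true X' fuel acc).filter fun y => π y.1 < π a) ⊆ B ∧
      (B.filter fun y => y.2 = w).card < r w ∧ B.sum (fun x => s x.1) < q := by
  induction fuel with
  | zero =>
    intro acc hfree ⟨x, hx, hxa⟩
    exact absurd hxa (hfree x hx)
  | succ n ih =>
    intro acc hfree hex
    rw [run_succ] at hex ⊢
    by_cases hq : q ≤ acc.sum (fun x => s x.1)
    · rw [if_pos hq] at hex ⊢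
      obtain ⟨x, hx, hxa⟩ := hex
      exact absurd hxa (hfree x hx)
    · rw [if_neg hq] at hex ⊢
      by_cases h : (Zs r X' acc).Nonempty
      · rw [dif_pos h] at hex ⊢
        set p := pick π (Zs r X' acc) h with hp
        have hpZ : p ∈ Zs r X' acc := (pick_spec π _ h).1
        have hpmin := (pick_spec π _ h).2
        rw [mem_Zs] at hpZ
        by_cases hpa : p.1 = a
        · refine ⟨p.2, ?_, acc, ?_, hpZ.2.1, not_le.mp hq⟩
          · have heq : ((a : ℕ), p.2) = p := by rw [← hpa]
            rw [heq]; exact hpZ.1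
          · intro y hy
            rw [Finset.mem_filter] at hy
            rcases run_mem s q r π X' n _ y hy.1 with hy' | hy'
            · rcases Finset.mem_insert.mp hy' with heq | hy''
              · exact absurd hy.2 (by rw [heq, hpa]; exact lt_irrefl _)
              · exact hy''
            · have hm := hpmin y (Zs_anti r X' (Finset.subset_insert _ _) hy')
              rw [hpa] at hm
              exact absurd hy.2 (not_lt.mpr hm)
        · have hfree' : ∀ y ∈ insert p acc, y.1 ≠ a := by
            intro y hy
            rcases Finset.mem_insert.mp hy with rfl | hy'
            · exact hpa
            · exact hfree y hy'
          exact ih _ hfree' hex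
      · rw [dif_neg h] at hex ⊢
        obtain ⟨x, hx, hxa⟩ := hex
        exact absurd hxa (hfree x hx)
lemma Chat_eq : Chat s q r π X' = run s q r π true X' (X'.card + 1) ∅ := rfl

end ChatProof

/-- respect of member state priorities: an asylum seeker `a`
with a contract in `X'` is accepted iff she qualifies for acceptance (the
burden-size of higher-priority accepted asylum seekers is below the quota) and
qualifies for some wait time of one of her contracts. -/
theorem chat_respectsPriorities (s : ℕ → ℕ) (q : ℕ) (r π : ℕ → ℕ)
    (hπ : Function.Injective π) (X' : Finset Ctr) (a : ℕ)
    (ha : ∃ x ∈ X', x.1 = a) :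
    (∃ x ∈ Chat s q r π X', x.1 = a) ↔
      (((Chat s q r π X').filter fun y => π y.1 < π a).sum fun y => s y.1) < q ∧
      ∃ w : ℕ, (a, w) ∈ X' ∧
        ((Chat s q r π X').filter fun y => y.2 = w ∧ π y.1 < π a).card < r w := by
  rw [ChatProof.Chat_eq]
  set F := run s q r π true X' (X'.card + 1) ∅ with hF
  constructor
  · intro hex
    obtain ⟨w, hw, B, hB, hcard, hsum⟩ :=
      ChatProof.fwd s q r π X' a (X'.card + 1) ∅ (by simp) hex
    refine ⟨lt_of_le_of_lt (Finset.sum_le_sum_of_subset hB) hsum, w, hw, ?_⟩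
    have hsub : (F.filter fun y => y.2 = w ∧ π y.1 < π a) ⊆
        B.filter fun y => y.2 = w := by
      intro y hy
      rw [Finset.mem_filter] at hy ⊢
      exact ⟨hB (Finset.mem_filter.mpr ⟨hy.1, hy.2.2⟩), hy.2.1⟩
    exact lt_of_le_of_lt (Finset.card_le_card hsub) hcard
  · rintro ⟨hsum, w, hw, hcnt⟩
    by_contra hna
    push_neg at hna
    have hfree : ∀ y ∈ F, y.1 ≠ (((a, w) : Ctr)).1 := fun y hy => hna y hy
    have K := ChatProof.key s q r π X' (a, w) hw (X'.card + 1) ∅ hfree (by simp)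
    have hwlt : ∀ z ∈ F, z.2 = w → π z.1 < π a := by
      intro z hz hzw
      have hle := (K z hz).2 hzw
      exact lt_of_le_of_ne hle (fun heq => hna z hz (hπ heq))
    have hcountF : (F.filter fun y => y.2 = w).card < r w := by
      refine lt_of_le_of_lt (Finset.card_le_card ?_) hcnt
      intro y hy
      rw [Finset.mem_filter] at hy ⊢
      exact ⟨hy.1, hy.2, hwlt y hy.1 hy.2⟩
    -- every accepted agent has priority strictly higher than a
    have hall : ∀ x ∈ F, π x.1 < π a := by
      intro x hx
      by_contra hcon
      have hgt : π a < π x.1 :=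
        lt_of_le_of_ne (not_lt.mp hcon) (fun heq => hna x hx (hπ heq.symm))
      exact absurd ((K x hx).1 hgt) (not_le.mpr hcountF)
    have hsum' : F.sum (fun x => s x.1) < q := by
      rwa [Finset.filter_true_of_mem hall] at hsum
    have hZ : ((a, w) : Ctr) ∈ ChatProof.Zs r X' F := by
      rw [ChatProof.mem_Zs]
      exact ⟨hw, hcountF, fun y hy => hna y hy⟩
    rcases ChatProof.run_fix s q r π X' (X'.card + 1) ∅ (by simp) with hfix | hfix
    · exact absurd hfix (not_le.mpr hsum')
    · rw [← hF] at hfix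
      exact absurd hZ (by rw [hfix]; exact Finset.notMem_empty _)
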